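/- The cobordism classes of nanowords over (α, τ) form a group under concatenation, in which the inverse of the class of a nanoword w is the class of the opposite nanoword w⁻. -/

import Mathlib

/-! Nanowords over an alphabet `α` with involution `τ`, following Turaev.
A letter is a pair (id, α-value); a nanoword is a word in which every letter id
occurs exactly twice, with a well-defined α-value. -/

/-- A letter of an `α`-alphabet: an identifier together with its projection to `α`. -/
abbrev Letter (α : Type) := ℕ × α

/-- `w` is a nanoword: each occurring letter id occurs exactly twice and determines
its `α`-value. -/
def IsNanoword {α : Type} (w : List (Letter α)) : Prop :=
  (∀ p ∈ w, (w.filter fun q => q.1 == p.1).length = 2) ∧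
  ∀ p ∈ w, ∀ q ∈ w, p.1 = q.1 → p.2 = q.2

/-- The set of letter ids occurring in a word. -/
def lettersOf {α : Type} (w : List (Letter α)) : Set ℕ := {n | ∃ a, (n, a) ∈ w}

/-- `splice [x₁,…,x_{k+1}] [v₁,…,v_k] = x₁ v₁ x₂ v₂ ⋯ x_k v_k x_{k+1}`:
the nanoword with a factor `(v₁|⋯|v_k)`. -/
def splice {α : Type} : List (List (Letter α)) → List (List (Letter α)) → List (Letter α)
  | [], _ => []
  | x :: xs, [] => x ++ splice xs []
  | x :: xs, v :: vs => x ++ v ++ splice xs vs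

/-- The nanophrase `vs = (v₁|⋯|v_k)` is symmetric: there is `ι` with `ι ∘ vᵣ = vᵣ⁻`
for all `r`, and `|ι B| = τ^{ε B} |B|` where `ε B = 0` iff both occurrences of `B`
lie in the same word of `vs`. -/
def IsSymPhrase {α : Type} (τ : α → α) (vs : List (List (Letter α))) : Prop :=
  ∃ ι : Letter α → Letter α,
    (∀ v ∈ vs, v.map ι = v.reverse) ∧
    ∀ B ∈ vs.flatten,
      ((∃ v ∈ vs, (v.filter fun q => q.1 == B.1).length = 2) → (ι B).2 = B.2) ∧
      ((¬ ∃ v ∈ vs, (v.filter fun q => q.1 == B.1).length = 2) → (ι B).2 = τ B.2)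

/-- The nanophrase is even: every constituent word has even length. -/
def IsEvenPhrase {α : Type} (vs : List (List (Letter α))) : Prop :=
  ∀ v ∈ vs, Even v.length

/-- The moves (TR): isomorphisms, the three homotopy moves, and surgeries. -/
inductive NanoMove {α : Type} (τ : α → α) : List (Letter α) → List (Letter α) → Prop
  | iso (w : List (Letter α)) (f : ℕ → ℕ) (hf : Function.Injective f)
      (hw : IsNanoword w) :
      NanoMove τ w (w.map fun p => (f p.1, p.2))
  | h1 (x y : List (Letter α)) (A : Letter α)
      (hw : IsNanoword (x ++ [A, A] ++ y)) :
      NanoMove τ (x ++ [A, A] ++ y) (x ++ y)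
  | h2 (x y z : List (Letter α)) (A B : Letter α) (hAB : B.2 = τ A.2)
      (hw : IsNanoword (x ++ [A, B] ++ y ++ [B, A] ++ z)) :
      NanoMove τ (x ++ [A, B] ++ y ++ [B, A] ++ z) (x ++ y ++ z)
  | h3 (x y z t : List (Letter α)) (A B C : Letter α)
      (hAB : A.2 = B.2) (hBC : B.2 = C.2)
      (hw : IsNanoword (x ++ [A, B] ++ y ++ [A, C] ++ z ++ [B, C] ++ t)) :
      NanoMove τ (x ++ [A, B] ++ y ++ [A, C] ++ z ++ [B, C] ++ t)
                 (x ++ [B, A] ++ y ++ [C, A] ++ z ++ [C, B] ++ t)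
  | surgery (xs vs : List (List (Letter α))) (hlen : xs.length = vs.length + 1)
      (hsym : IsSymPhrase τ vs) (heven : IsEvenPhrase vs)
      (hw : IsNanoword (splice xs vs)) :
      NanoMove τ (splice xs vs) xs.flatten

/-- Cobordism: the equivalence relation generated by the moves (TR). -/
def Cobordant {α : Type} (τ : α → α) : List (Letter α) → List (Letter α) → Prop :=
  Relation.EqvGen (NanoMove τ)

/-- The type of nanowords over `α`. -/
def Nano (α : Type) := {w : List (Letter α) // IsNanoword w}

/-- The setoid of cobordism on nanowords. -/
def nanoSetoid {α : Type} (τ : α → α) : Setoid (Nano α) where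
  r v w := Cobordant τ v.1 w.1
  iseqv := ⟨fun v => Relation.EqvGen.refl v.1,
    fun h => Relation.EqvGen.symm _ _ h,
    fun h h' => Relation.EqvGen.trans _ _ _ h h'⟩


namespace NanoAux

variable {α : Type}

/-- relabel ids -/
def rl (f : ℕ → ℕ) (w : List (Letter α)) : List (Letter α) :=
  w.map fun p => (f p.1, p.2)

/-- number of occurrences of id `n` -/
def cnt (n : ℕ) (w : List (Letter α)) : ℕ :=
  (w.filter fun q => q.1 == n).length

lemma nano_cnt {w : List (Letter α)} (hw : IsNanoword w) {p : Letter α} (hp : p ∈ w) :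
    cnt p.1 w = 2 := hw.1 p hp

lemma isNanoword_iff (w : List (Letter α)) :
    IsNanoword w ↔ ((∀ p ∈ w, cnt p.1 w = 2) ∧
      ∀ p ∈ w, ∀ q ∈ w, p.1 = q.1 → p.2 = q.2) := Iff.rfl

lemma cnt_append (n : ℕ) (a b : List (Letter α)) :
    cnt n (a ++ b) = cnt n a + cnt n b := by
  simp [cnt, List.filter_append]

lemma cnt_reverse (n : ℕ) (a : List (Letter α)) : cnt n a.reverse = cnt n a := by
  simp [cnt, List.filter_reverse]

lemma cnt_eq_zero {n : ℕ} {a : List (Letter α)} (h : ∀ q ∈ a, q.1 ≠ n) :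
    cnt n a = 0 := by
  simp only [cnt, List.length_eq_zero_iff]
  exact List.filter_eq_nil_iff.2 (by intro q hq; simpa using h q hq)

lemma one_le_cnt {p : Letter α} {a : List (Letter α)} (h : p ∈ a) :
    1 ≤ cnt p.1 a := by
  have : p ∈ a.filter fun q => q.1 == p.1 := List.mem_filter.2 ⟨h, by simp⟩
  have h2 := List.length_pos_iff.2 (List.ne_nil_of_mem this)
  unfold cnt
  omega

lemma cnt_rl {f : ℕ → ℕ} (hf : Function.Injective f) (n : ℕ) (w : List (Letter α)) :
    cnt (f n) (rl f w) = cnt n w := by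
  simp only [cnt, rl, ← List.countP_eq_length_filter, List.countP_map]
  apply List.countP_congr
  intro q _
  simp [Function.comp, hf.eq_iff]

lemma mem_rl {f : ℕ → ℕ} {w : List (Letter α)} {p : Letter α} (h : p ∈ w) :
    (f p.1, p.2) ∈ rl f w :=
  List.mem_map_of_mem h

lemma mem_rl_iff {f : ℕ → ℕ} {w : List (Letter α)} {p' : Letter α} :
    p' ∈ rl f w ↔ ∃ p ∈ w, p' = (f p.1, p.2) := by
  simp only [rl, List.mem_map]
  constructor
  · rintro ⟨p, hp, rfl⟩; exact ⟨p, hp, rfl⟩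
  · rintro ⟨p, hp, rfl⟩; exact ⟨p, hp, rfl⟩

lemma rl_append (f : ℕ → ℕ) (a b : List (Letter α)) :
    rl f (a ++ b) = rl f a ++ rl f b := List.map_append

lemma rl_rl (f g : ℕ → ℕ) (w : List (Letter α)) :
    rl f (rl g w) = rl (f ∘ g) w := by simp [rl, Function.comp]

lemma rl_reverse (f : ℕ → ℕ) (w : List (Letter α)) :
    rl f w.reverse = (rl f w).reverse := List.map_reverse

lemma rl_congr {f g : ℕ → ℕ} {w : List (Letter α)} (h : ∀ p ∈ w, f p.1 = g p.1) :
    rl f w = rl g w := List.map_congr_left (fun p hp => by simp [h p hp])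

lemma length_rl (f : ℕ → ℕ) (w : List (Letter α)) : (rl f w).length = w.length :=
  List.length_map _

lemma isNanoword_rl {f : ℕ → ℕ} (hf : Function.Injective f) {w : List (Letter α)}
    (hw : IsNanoword w) : IsNanoword (rl f w) := by
  constructor
  · intro p' hp'
    obtain ⟨p, hp, rfl⟩ := mem_rl_iff.1 hp'
    show cnt (f p.1) (rl f w) = 2
    rw [cnt_rl hf]
    exact hw.1 p hp
  · intro p' hp' q' hq' h
    obtain ⟨p, hp, rfl⟩ := mem_rl_iff.1 hp'
    obtain ⟨q, hq, rfl⟩ := mem_rl_iff.1 hq'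
    exact hw.2 p hp q hq (hf h)

lemma isNanoword_reverse {w : List (Letter α)} (hw : IsNanoword w) :
    IsNanoword w.reverse := by
  constructor
  · intro p hp
    show cnt p.1 w.reverse = 2
    rw [cnt_reverse]
    exact hw.1 p (List.mem_reverse.1 hp)
  · intro p hp q hq h
    exact hw.2 p (List.mem_reverse.1 hp) q (List.mem_reverse.1 hq) h

/-- ids disjointness as a pointwise statement -/
def IdDisj (a b : List (Letter α)) : Prop := ∀ p ∈ a, ∀ q ∈ b, p.1 ≠ q.1

lemma cnt_eq_zero_of_idDisj {a b : List (Letter α)} (h : IdDisj a b) {p : Letter α}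
    (hp : p ∈ a) : cnt p.1 b = 0 :=
  cnt_eq_zero (fun q hq => (h p hp q hq).symm)

lemma mem_mid_cases {x u y : List (Letter α)} {p : Letter α} (hp : p ∈ x ++ u ++ y) :
    p ∈ u ∨ p ∈ x ++ y := by
  rcases List.mem_append.1 hp with h | h
  · rcases List.mem_append.1 h with h | h
    · exact Or.inr (List.mem_append.2 (Or.inl h))
    · exact Or.inl h
  · exact Or.inr (List.mem_append.2 (Or.inr h))

lemma isNanoword_mid {x u y : List (Letter α)} (hxy : IsNanoword (x ++ y))
    (hu : IsNanoword u) (hd : IdDisj u (x ++ y)) : IsNanoword (x ++ u ++ y) := by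
  have key : ∀ n, cnt n (x ++ u ++ y) = cnt n (x ++ y) + cnt n u := by
    intro n; simp [cnt_append]; omega
  constructor
  · intro p hp
    show cnt p.1 _ = 2
    rw [key]
    rcases mem_mid_cases hp with h | h
    · rw [cnt_eq_zero_of_idDisj hd h, nano_cnt hu h]
    · have h0 : cnt p.1 u = 0 := by
        apply cnt_eq_zero
        intro q hq
        exact hd q hq p h
      rw [h0, nano_cnt hxy h]
  · intro p hp q hq hpq
    rcases mem_mid_cases hp with h1 | h1 <;> rcases mem_mid_cases hq with h2 | h2
    · exact hu.2 p h1 q h2 hpq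
    · exact absurd hpq (hd p h1 q h2)
    · exact absurd hpq.symm (hd q h2 p h1)
    · exact hxy.2 p h1 q h2 hpq

lemma mem_mid_of_side {x a y : List (Letter α)} {p : Letter α} (hp : p ∈ x ++ y) :
    p ∈ x ++ a ++ y := by
  rcases List.mem_append.1 hp with h' | h'
  · exact List.mem_append.2 (Or.inl (List.mem_append.2 (Or.inl h')))
  · exact List.mem_append.2 (Or.inr h')

lemma isNanoword_mid_split {x a y : List (Letter α)} (h : IsNanoword (x ++ a ++ y))
    (ha : IsNanoword a) : IsNanoword (x ++ y) ∧ IdDisj a (x ++ y) := by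
  have key : ∀ n, cnt n (x ++ a ++ y) = cnt n (x ++ y) + cnt n a := by
    intro n; simp [cnt_append]; omega
  have hd : IdDisj a (x ++ y) := by
    intro p hp q hq hpq
    have h1 := nano_cnt ha hp
    have h2 := nano_cnt h (List.mem_append.2 (Or.inl (List.mem_append.2 (Or.inr hp))))
    have h3 : 1 ≤ cnt p.1 (x ++ y) := by rw [hpq]; exact one_le_cnt hq
    rw [key] at h2
    omega
  refine ⟨⟨?_, ?_⟩, hd⟩
  · intro p hp
    have h2 := nano_cnt h (mem_mid_of_side (a := a) hp)
    show cnt p.1 (x ++ y) = 2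
    have h0 : cnt p.1 a = 0 := by
      apply cnt_eq_zero
      intro q hq
      exact hd q hq p hp
    rw [key] at h2
    omega
  · intro p hp q hq hpq
    exact h.2 p (mem_mid_of_side hp) q (mem_mid_of_side hq) hpq

lemma isNanoword_append {a b : List (Letter α)} (ha : IsNanoword a) (hb : IsNanoword b)
    (hd : IdDisj a b) : IsNanoword (a ++ b) := by
  have hd' : IdDisj b (a ++ []) := by
    intro p hp q hq
    simp only [List.append_nil] at hq
    exact fun h => hd q hq p hp h.symm
  have := isNanoword_mid (x := a) (y := ([] : List (Letter α))) (u := b)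
    (by simpa using ha) hb hd'
  simpa using this

end NanoAux

namespace NanoAux

variable {α : Type}

open Classical in
/-- extend an injective-on-a-finset map to a permutation of ℕ -/
lemma exists_perm_extend (s : Finset ℕ) (f : ℕ → ℕ) (hf : Set.InjOn f s) :
    ∃ σ : Equiv.Perm ℕ, ∀ n ∈ s, σ n = f n := by
  classical
  set S : Set ℕ := ↑s with hS
  set T : Set ℕ := ↑(s.image f) with hT
  have hST : ∀ x : S, f x ∈ T := by
    rintro ⟨x, hx⟩
    simp only [hT, Finset.coe_image, Set.mem_image]
    exact ⟨x, hx, rfl⟩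
  have hbij : Set.BijOn f S T := by
    refine ⟨fun x hx => hST ⟨x, hx⟩, hf, ?_⟩
    rintro y hy
    simp only [hT, Finset.coe_image, Set.mem_image] at hy
    obtain ⟨x, hx, rfl⟩ := hy
    exact ⟨x, hx, rfl⟩
  let e₀ : S ≃ T := hbij.equiv f
  have hSfin : S.Finite := s.finite_toSet
  have hTfin : T.Finite := (s.image f).finite_toSet
  haveI : Infinite (↥Sᶜ) := Set.infinite_coe_iff.2 hSfin.infinite_compl
  haveI : Infinite (↥Tᶜ) := Set.infinite_coe_iff.2 hTfin.infinite_compl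
  obtain ⟨e₁⟩ : Nonempty ((↥Sᶜ) ≃ (↥Tᶜ)) := inferInstance
  obtain ⟨σ, hσ⟩ := (Equiv.Set.compl e₀).symm e₁
  refine ⟨σ, fun n hn => ?_⟩
  have hmem : n ∈ S := by simpa [hS] using hn
  have h1 := hσ ⟨n, hmem⟩
  have h2 : ((e₀ ⟨n, hmem⟩ : T) : ℕ) = f n := rfl
  rw [h1, h2]

/-- ids of a word, as a finset -/
def idsF (w : List (Letter α)) : Finset ℕ := (w.map Prod.fst).toFinset

lemma mem_idsF {w : List (Letter α)} {n : ℕ} :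
    n ∈ idsF w ↔ ∃ p ∈ w, p.1 = n := by
  simp only [idsF, List.mem_toFinset, List.mem_map]

lemma fst_mem_idsF {w : List (Letter α)} {p : Letter α} (h : p ∈ w) : p.1 ∈ idsF w :=
  mem_idsF.2 ⟨p, h, rfl⟩

end NanoAux

namespace NanoAux

variable {α : Type} {τ : α → α}

lemma splice_context : ∀ (vs xs : List (List (Letter α))) (x y : List (Letter α)),
    xs.length = vs.length + 1 →
    ∃ xs' : List (List (Letter α)), xs'.length = vs.length + 1 ∧
      splice xs' vs = x ++ splice xs vs ++ y ∧
      xs'.flatten = x ++ xs.flatten ++ y := by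
  intro vs
  induction vs with
  | nil =>
    intro xs x y hlen
    match xs, hlen with
    | [x₀], _ =>
      refine ⟨[x ++ x₀ ++ y], rfl, ?_, ?_⟩ <;> simp [splice]
  | cons v vss ih =>
    intro xs x y hlen
    match xs, hlen with
    | x₀ :: rest, hlen =>
      have hr : rest.length = vss.length + 1 := by simpa using hlen
      obtain ⟨rest', hlen', hsp, hfl⟩ := ih rest [] y hr
      refine ⟨(x ++ x₀) :: rest', by simpa using hlen', ?_, ?_⟩
      · show (x ++ x₀) ++ v ++ splice rest' vss = x ++ (x₀ ++ v ++ splice rest vss) ++ y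
        rw [hsp]
        simp
      · show (x ++ x₀) ++ rest'.flatten = x ++ (x₀ ++ rest.flatten) ++ y
        rw [hfl]
        simp

/-- letter relabeling -/
def Lr (f : ℕ → ℕ) (p : Letter α) : Letter α := (f p.1, p.2)

lemma rl_eq_map (f : ℕ → ℕ) (w : List (Letter α)) : rl f w = w.map (Lr f) := rfl

lemma rl_splice (f : ℕ → ℕ) : ∀ (xs vs : List (List (Letter α))),
    rl f (splice xs vs) = splice (xs.map (rl f)) (vs.map (rl f))
  | [], _ => by simp [splice, rl]
  | x :: xs, [] => by
      simp only [splice, List.map_cons, rl_append]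
      rw [rl_splice f xs []]
      simp [splice]
  | x :: xs, v :: vs => by
      simp only [splice, List.map_cons, rl_append]
      rw [rl_splice f xs vs]

lemma flatten_map_rl (f : ℕ → ℕ) (xs : List (List (Letter α))) :
    (xs.map (rl f)).flatten = rl f xs.flatten := by
  induction xs with
  | nil => simp [rl]
  | cons x xs ih => simp [rl_append, ih]

lemma isSymPhrase_rl (ρ : Equiv.Perm ℕ) {vs : List (List (Letter α))}
    (h : IsSymPhrase τ vs) : IsSymPhrase τ (vs.map (rl ρ)) := by
  obtain ⟨ι, h1, h2⟩ := h
  refine ⟨fun p => (ρ ((ι (ρ.symm p.1, p.2)).1), (ι (ρ.symm p.1, p.2)).2), ?_, ?_⟩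
  · intro v' hv'
    obtain ⟨v, hv, rfl⟩ := List.mem_map.1 hv'
    have : ∀ p : Letter α, (fun p : Letter α =>
        ((ρ ((ι (ρ.symm p.1, p.2)).1), (ι (ρ.symm p.1, p.2)).2) : Letter α)) (Lr ρ p)
        = Lr ρ (ι p) := by
      intro p
      simp [Lr]
    rw [rl_eq_map, List.map_map]
    have : (v.map fun p => ((ρ ((ι (ρ.symm (Lr ρ p).1, (Lr ρ p).2)).1),
        (ι (ρ.symm (Lr ρ p).1, (Lr ρ p).2)).2) : Letter α)) = v.map (Lr ρ ∘ ι) := by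
      apply List.map_congr_left
      intro p _
      simp [Lr]
    rw [show ((fun p : Letter α => ((ρ ((ι (ρ.symm p.1, p.2)).1),
        (ι (ρ.symm p.1, p.2)).2) : Letter α)) ∘ Lr ρ) = fun p =>
        ((ρ ((ι (ρ.symm (Lr ρ p).1, (Lr ρ p).2)).1),
        (ι (ρ.symm (Lr ρ p).1, (Lr ρ p).2)).2) : Letter α) from rfl, this]
    rw [← List.map_map, h1 v hv, ← rl_eq_map, rl_reverse]
    rfl
  · intro B' hB'
    obtain ⟨v', hv', hBv'⟩ := List.mem_flatten.1 hB'
    obtain ⟨v, hv, rfl⟩ := List.mem_map.1 hv'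
    obtain ⟨B, hB, rfl⟩ := mem_rl_iff.1 hBv'
    have hBfl : B ∈ vs.flatten := List.mem_flatten.2 ⟨v, hv, hB⟩
    have hcnt : (∃ w ∈ vs.map (rl ρ), cnt (ρ B.1) w = 2) ↔ (∃ w ∈ vs, cnt B.1 w = 2) := by
      constructor
      · rintro ⟨w', hw', hc⟩
        obtain ⟨w, hw, rfl⟩ := List.mem_map.1 hw'
        exact ⟨w, hw, by rwa [cnt_rl ρ.injective] at hc⟩
      · rintro ⟨w, hw, hc⟩
        exact ⟨rl ρ w, List.mem_map.2 ⟨w, hw, rfl⟩, by rwa [cnt_rl ρ.injective]⟩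
    have key : ∀ P : Prop, ((∃ w ∈ vs, (w.filter fun q => q.1 == B.1).length = 2) → P)
        → ((∃ w ∈ vs.map (rl ρ), (w.filter fun q => q.1 == (ρ B.1)).length = 2) → P) := by
      intro P hP hex
      exact hP (hcnt.1 hex)
    constructor
    · intro hex
      show (ι (ρ.symm (ρ B.1), B.2)).2 = B.2
      rw [Equiv.symm_apply_apply]
      exact (h2 B hBfl).1 (hcnt.1 hex)
    · intro hnex
      show (ι (ρ.symm (ρ B.1), B.2)).2 = τ B.2
      rw [Equiv.symm_apply_apply]
      exact (h2 B hBfl).2 (fun hex => hnex (hcnt.2 hex))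

lemma isEvenPhrase_rl (f : ℕ → ℕ) {vs : List (List (Letter α))}
    (h : IsEvenPhrase vs) : IsEvenPhrase (vs.map (rl f)) := by
  intro v' hv'
  obtain ⟨v, hv, rfl⟩ := List.mem_map.1 hv'
  rw [length_rl]
  exact h v hv

/-- moves are equivariant under permutations of ids -/
lemma nanoMove_rl (ρ : Equiv.Perm ℕ) {u v : List (Letter α)} (h : NanoMove τ u v) :
    NanoMove τ (rl ρ u) (rl ρ v) := by
  cases h with
  | iso w f hf hw =>
    have h1 := NanoMove.iso (τ := τ) (rl ρ u) (ρ ∘ f ∘ ρ.symm)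
      (ρ.injective.comp (hf.comp ρ.symm.injective)) (isNanoword_rl ρ.injective hw)
    have h2 : ((rl ρ u).map fun p => ((ρ ∘ f ∘ ρ.symm) p.1, p.2)) =
        rl ρ (u.map fun p => (f p.1, p.2)) := by
      show rl (ρ ∘ f ∘ ρ.symm) (rl ρ u) = rl ρ (rl f u)
      rw [rl_rl, rl_rl]
      apply rl_congr
      intro p _
      simp
    rwa [h2] at h1
  | h1 x y A hw =>
    have h1 := NanoMove.h1 (τ := τ) (rl ρ x) (rl ρ y) (Lr ρ A)
      (by rw [show rl ρ x ++ [Lr ρ A, Lr ρ A] ++ rl ρ y = rl ρ (x ++ [A, A] ++ y) by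
            simp [rl_append, rl, Lr]
          ]
          exact isNanoword_rl ρ.injective hw)
    rw [show rl ρ x ++ [Lr ρ A, Lr ρ A] ++ rl ρ y = rl ρ (x ++ [A, A] ++ y) by
          simp [rl_append, rl, Lr], ← rl_append] at h1
    exact h1
  | h2 x y z A B hAB hw =>
    have e : rl ρ x ++ [Lr ρ A, Lr ρ B] ++ rl ρ y ++ [Lr ρ B, Lr ρ A] ++ rl ρ z
        = rl ρ (x ++ [A, B] ++ y ++ [B, A] ++ z) := by simp [rl_append, rl, Lr]
    have h1 := NanoMove.h2 (τ := τ) (rl ρ x) (rl ρ y) (rl ρ z) (Lr ρ A) (Lr ρ B)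
      (by simpa [Lr] using hAB) (by rw [e]; exact isNanoword_rl ρ.injective hw)
    rw [e, show rl ρ x ++ rl ρ y ++ rl ρ z = rl ρ (x ++ y ++ z) by simp [rl_append]] at h1
    exact h1
  | h3 x y z t A B C hAB hBC hw =>
    have e : rl ρ x ++ [Lr ρ A, Lr ρ B] ++ rl ρ y ++ [Lr ρ A, Lr ρ C] ++ rl ρ z
        ++ [Lr ρ B, Lr ρ C] ++ rl ρ t
        = rl ρ (x ++ [A, B] ++ y ++ [A, C] ++ z ++ [B, C] ++ t) := by
      simp [rl_append, rl, Lr]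
    have e' : rl ρ x ++ [Lr ρ B, Lr ρ A] ++ rl ρ y ++ [Lr ρ C, Lr ρ A] ++ rl ρ z
        ++ [Lr ρ C, Lr ρ B] ++ rl ρ t
        = rl ρ (x ++ [B, A] ++ y ++ [C, A] ++ z ++ [C, B] ++ t) := by
      simp [rl_append, rl, Lr]
    have h1 := NanoMove.h3 (τ := τ) (rl ρ x) (rl ρ y) (rl ρ z) (rl ρ t)
      (Lr ρ A) (Lr ρ B) (Lr ρ C)
      (by simpa [Lr] using hAB) (by simpa [Lr] using hBC)
      (by rw [e]; exact isNanoword_rl ρ.injective hw)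
    rw [e, e'] at h1
    exact h1
  | surgery xs vs hlen hsym heven hw =>
    have h1 := NanoMove.surgery (τ := τ) (xs.map (rl ρ)) (vs.map (rl ρ))
      (by simpa using hlen) (isSymPhrase_rl ρ hsym) (isEvenPhrase_rl ρ heven)
      (by rw [← rl_splice]; exact isNanoword_rl ρ.injective hw)
    rw [← rl_splice, flatten_map_rl] at h1
    exact h1

end NanoAux

namespace NanoAux

variable {α : Type} {τ : α → α}

lemma rl_id (w : List (Letter α)) : rl id w = w := by
  simp [rl]

lemma not_mem_idsF_of_idDisj {u w : List (Letter α)} (hd : IdDisj u w) {q : Letter α}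
    (hq : q ∈ w) : q.1 ∉ idsF u := by
  intro hmem
  obtain ⟨p, hp, hpq⟩ := mem_idsF.1 hmem
  exact hd p hp q hq hpq

/-- a single move can be performed inside a context of disjoint letters -/
lemma nanoMove_embed {x y u v : List (Letter α)} (hxy : IsNanoword (x ++ y))
    (hdu : IdDisj u (x ++ y)) (hdv : IdDisj v (x ++ y)) (h : NanoMove τ u v) :
    NanoMove τ (x ++ u ++ y) (x ++ v ++ y) := by
  classical
  cases h with
  | iso w f hf hw =>
    set f₀ : ℕ → ℕ := fun n => if n ∈ idsF u then f n else n with hf₀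
    have hinj : Set.InjOn f₀ ↑(idsF u ∪ idsF (x ++ y)) := by
      intro m hm n hn hmn
      simp only [hf₀] at hmn
      by_cases h1 : m ∈ idsF u <;> by_cases h2 : n ∈ idsF u <;>
        simp only [h1, h2, if_pos, if_neg, if_true, if_false] at hmn
      · exact hf hmn
      · -- f m = n, m ∈ ids u, n ∈ ids (x++y)
        exfalso
        have hn' : n ∈ idsF (x ++ y) := by
          rcases Finset.mem_union.1 hn with h' | h'
          · exact absurd h' h2
          · exact h'
        obtain ⟨p, hp, hpm⟩ := mem_idsF.1 h1
        obtain ⟨q, hq, hqn⟩ := mem_idsF.1 hn'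
        have : (f p.1, p.2) ∈ u.map fun r => ((f r.1, r.2) : Letter α) :=
          List.mem_map_of_mem hp
        have := hdv _ this q hq
        simp only [hpm, hqn] at this ⊢
        exact this hmn
      · exfalso
        have hm' : m ∈ idsF (x ++ y) := by
          rcases Finset.mem_union.1 hm with h' | h'
          · exact absurd h' h1
          · exact h'
        obtain ⟨p, hp, hpn⟩ := mem_idsF.1 h2
        obtain ⟨q, hq, hqm⟩ := mem_idsF.1 hm'
        have : (f p.1, p.2) ∈ u.map fun r => ((f r.1, r.2) : Letter α) :=
          List.mem_map_of_mem hp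
        have := hdv _ this q hq
        simp only [hpn, hqm] at this ⊢
        exact (this hmn.symm).elim
      · exact hmn
    obtain ⟨g, hg⟩ := exists_perm_extend _ f₀ hinj
    have hnano : IsNanoword (x ++ u ++ y) := isNanoword_mid hxy hw hdu
    have h1 := NanoMove.iso (τ := τ) (x ++ u ++ y) g g.injective hnano
    have e : ((x ++ u ++ y).map fun p => ((g p.1 : ℕ), p.2))
        = x ++ (u.map fun p => ((f p.1 : ℕ), p.2)) ++ y := by
      show rl g (x ++ u ++ y) = x ++ rl f u ++ y
      rw [rl_append, rl_append]
      congr 1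
      · congr 1
        · rw [show x = rl id x from (rl_id x).symm]
          rw [rl_rl]
          apply rl_congr
          intro p hp
          have hp' : p ∈ x ++ y := List.mem_append.2 (Or.inl (by simpa [rl_id] using hp))
          have hnm : p.1 ∉ idsF u := not_mem_idsF_of_idDisj hdu hp'
          simp only [Function.comp, id_eq]
          rw [hg _ (Finset.mem_union.2 (Or.inr (fst_mem_idsF hp')))]
          simp [hf₀, hnm]
        · apply rl_congr
          intro p hp
          rw [hg _ (Finset.mem_union.2 (Or.inl (fst_mem_idsF hp)))]
          simp [hf₀, fst_mem_idsF hp]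
      · rw [show y = rl id y from (rl_id y).symm, rl_rl]
        apply rl_congr
        intro p hp
        have hp' : p ∈ x ++ y := List.mem_append.2 (Or.inr (by simpa [rl_id] using hp))
        have hnm : p.1 ∉ idsF u := not_mem_idsF_of_idDisj hdu hp'
        simp only [Function.comp, id_eq]
        rw [hg _ (Finset.mem_union.2 (Or.inr (fst_mem_idsF hp')))]
        simp [hf₀, hnm]
    rwa [e] at h1
  | h1 x' y' A hw =>
    have e1 : (x ++ x') ++ [A, A] ++ (y' ++ y) = x ++ (x' ++ [A, A] ++ y') ++ y := by simp
    have e2 : (x ++ x') ++ (y' ++ y) = x ++ (x' ++ y') ++ y := by simp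
    have h1 := NanoMove.h1 (τ := τ) (x ++ x') (y' ++ y) A
      (by rw [e1]; exact isNanoword_mid hxy hw hdu)
    rwa [e1, e2] at h1
  | h2 x' y' z' A B hAB hw =>
    have e1 : (x ++ x') ++ [A, B] ++ y' ++ [B, A] ++ (z' ++ y)
        = x ++ (x' ++ [A, B] ++ y' ++ [B, A] ++ z') ++ y := by simp
    have e2 : (x ++ x') ++ y' ++ (z' ++ y) = x ++ (x' ++ y' ++ z') ++ y := by simp
    have h1 := NanoMove.h2 (τ := τ) (x ++ x') y' (z' ++ y) A B hAB
      (by rw [e1]; exact isNanoword_mid hxy hw hdu)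
    rwa [e1, e2] at h1
  | h3 x' y' z' t' A B C hAB hBC hw =>
    have e1 : (x ++ x') ++ [A, B] ++ y' ++ [A, C] ++ z' ++ [B, C] ++ (t' ++ y)
        = x ++ (x' ++ [A, B] ++ y' ++ [A, C] ++ z' ++ [B, C] ++ t') ++ y := by simp
    have e2 : (x ++ x') ++ [B, A] ++ y' ++ [C, A] ++ z' ++ [C, B] ++ (t' ++ y)
        = x ++ (x' ++ [B, A] ++ y' ++ [C, A] ++ z' ++ [C, B] ++ t') ++ y := by simp
    have h1 := NanoMove.h3 (τ := τ) (x ++ x') y' z' (t' ++ y) A B C hAB hBC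
      (by rw [e1]; exact isNanoword_mid hxy hw hdu)
    rwa [e1, e2] at h1
  | surgery xs vs hlen hsym heven hw =>
    obtain ⟨xs', hlen', hsp, hfl⟩ := splice_context vs xs x y hlen
    have h1 := NanoMove.surgery (τ := τ) xs' vs hlen' hsym heven
      (by rw [hsp]; exact isNanoword_mid hxy hw hdu)
    rwa [hsp, hfl] at h1

end NanoAux

namespace NanoAux

variable {α : Type} {τ : α → α}

/-- all ids of `w` avoid `S` -/
def OKS (S : Finset ℕ) (w : List (Letter α)) : Prop := ∀ p ∈ w, p.1 ∉ S

/-- a single move (in either direction) between words avoiding `S` -/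
def Step (τ : α → α) (S : Finset ℕ) (u v : List (Letter α)) : Prop :=
  (NanoMove τ u v ∨ NanoMove τ v u) ∧ OKS S u ∧ OKS S v

/-- chains of moves avoiding `S` -/
def Chain (τ : α → α) (S : Finset ℕ) : List (Letter α) → List (Letter α) → Prop :=
  Relation.ReflTransGen (Step τ S)

lemma step_symm {S : Finset ℕ} : Symmetric (Step τ S) := by
  rintro u v ⟨h, h1, h2⟩
  exact ⟨h.symm, h2, h1⟩

lemma chain_symm {S : Finset ℕ} {a b : List (Letter α)} (h : Chain τ S a b) :
    Chain τ S b a := (@Relation.ReflTransGen.stdSymm _ _ ⟨fun _ _ h' => step_symm h'⟩).symm _ _ h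

lemma chain_to_cobordant {S : Finset ℕ} {a b : List (Letter α)} (h : Chain τ S a b) :
    Cobordant τ a b := by
  induction h with
  | refl => exact Relation.EqvGen.refl a
  | tail hac hstep ih =>
    obtain ⟨hmv, -, -⟩ := hstep
    rcases hmv with hmv | hmv
    · exact Relation.EqvGen.trans _ _ _ ih (Relation.EqvGen.rel _ _ hmv)
    · exact Relation.EqvGen.trans _ _ _ ih
        (Relation.EqvGen.symm _ _ (Relation.EqvGen.rel _ _ hmv))

lemma okS_rl {S : Finset ℕ} {w : List (Letter α)} (ρ : Equiv.Perm ℕ) (h : OKS S w) :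
    OKS (S.image ρ) (rl ρ w) := by
  intro p hp hin
  obtain ⟨q, hq, rfl⟩ := mem_rl_iff.1 hp
  obtain ⟨s, hs, hse⟩ := Finset.mem_image.1 hin
  exact h q hq (by rwa [← ρ.injective hse])

lemma chain_rl {S : Finset ℕ} {a b : List (Letter α)} (ρ : Equiv.Perm ℕ)
    (h : Chain τ S a b) : Chain τ (S.image ρ) (rl ρ a) (rl ρ b) := by
  induction h with
  | refl => exact Relation.ReflTransGen.refl
  | tail hac hstep ih =>
    rcases hstep with ⟨hmv | hmv, h1, h2⟩
    · exact ih.tail ⟨Or.inl (nanoMove_rl ρ hmv), okS_rl ρ h1, okS_rl ρ h2⟩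
    · exact ih.tail ⟨Or.inr (nanoMove_rl ρ hmv), okS_rl ρ h1, okS_rl ρ h2⟩

lemma okS_of_idDisj {S : Finset ℕ} {w u : List (Letter α)} (hS : S = idsF u)
    (h : IdDisj w u) : OKS S w := by
  intro p hp hin
  rw [hS] at hin
  obtain ⟨q, hq, hqe⟩ := mem_idsF.1 hin
  exact h p hp q hq hqe.symm

lemma cobordant_to_chain {a b : List (Letter α)} (h : Cobordant τ a b) :
    ∀ S : Finset ℕ, OKS S a → OKS S b → Chain τ S a b := by
  induction h with
  | rel u v huv =>
    intro S hu hv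
    exact Relation.ReflTransGen.single ⟨Or.inl huv, hu, hv⟩
  | refl u => intro S _ _; exact Relation.ReflTransGen.refl
  | symm u v _ ih =>
    intro S hu hv
    exact chain_symm (ih S hv hu)
  | trans u m v _ _ ih1 ih2 =>
    intro S hu hv
    classical
    set G : Finset ℕ := idsF u ∪ idsF v with hG
    set N : ℕ := (S ∪ G ∪ idsF m).sup id + 1 with hN
    have hlt : ∀ n ∈ S ∪ G ∪ idsF m, n < N := by
      intro n hn
      have := Finset.le_sup (f := id) hn
      simp only [id_eq] at this
      omega
    set f₀ : ℕ → ℕ := fun n => if n ∈ G then n else n + N with hf₀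
    have hinj : Set.InjOn f₀ ↑(G ∪ idsF m) := by
      intro p hp q hq hpq
      simp only [hf₀] at hpq
      by_cases h1 : p ∈ G <;> by_cases h2 : q ∈ G <;>
        simp only [h1, h2, if_true, if_false] at hpq
      · exact hpq
      · exfalso
        have : p < N := hlt p (by simp [Finset.mem_union, h1])
        omega
      · exfalso
        have : q < N := hlt q (by simp [Finset.mem_union, h2])
        omega
      · omega
    obtain ⟨ρ, hρ⟩ := exists_perm_extend _ f₀ hinj
    have hfixG : ∀ n ∈ G, ρ n = n := by
      intro n hn
      rw [hρ n (Finset.mem_union.2 (Or.inl hn))]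
      simp [hf₀, hn]
    have hrla : rl (⇑ρ) u = u := by
      rw [show u = rl id u from (rl_id u).symm, rl_rl]
      apply rl_congr
      intro p hp
      simp only [Function.comp, id_eq]
      rw [hfixG _ (Finset.mem_union.2 (Or.inl (fst_mem_idsF (by simpa [rl_id] using hp))))]
    have hrlb : rl (⇑ρ) v = v := by
      rw [show v = rl id v from (rl_id v).symm, rl_rl]
      apply rl_congr
      intro p hp
      simp only [Function.comp, id_eq]
      rw [hfixG _ (Finset.mem_union.2 (Or.inr (fst_mem_idsF (by simpa [rl_id] using hp))))]
    set S₁ : Finset ℕ := S.image ρ.symm with hS₁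
    have himg : S₁.image ρ = S := by
      rw [hS₁, Finset.image_image]
      have : (⇑ρ ∘ ⇑ρ.symm) = id := by
        funext n; simp
      rw [this, Finset.image_id]
    -- OKS S₁ u : ids of u avoid S₁
    have hidG : ∀ n ∈ G, n ∉ S := by
      intro n hn hnS
      rcases Finset.mem_union.1 hn with h' | h'
      · obtain ⟨p, hp, rfl⟩ := mem_idsF.1 h'
        exact hu p hp hnS
      · obtain ⟨p, hp, rfl⟩ := mem_idsF.1 h'
        exact hv p hp hnS
    have hOK : ∀ w : List (Letter α), OKS S w → (∀ p ∈ w, p.1 ∈ G) → OKS S₁ w := by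
      intro w hw hG' p hp hin
      obtain ⟨s, hs, hse⟩ := Finset.mem_image.1 hin
      have : ρ p.1 = s := by rw [← hse]; simp
      rw [hfixG _ (hG' p hp)] at this
      exact hw p hp (this ▸ hs)
    have hOKu : OKS S₁ u := hOK u hu (fun p hp => Finset.mem_union.2 (Or.inl (fst_mem_idsF hp)))
    have hOKv : OKS S₁ v := hOK v hv (fun p hp => Finset.mem_union.2 (Or.inr (fst_mem_idsF hp)))
    have hOKm : OKS S₁ m := by
      intro p hp hin
      obtain ⟨s, hs, hse⟩ := Finset.mem_image.1 hin
      have hps : ρ p.1 = s := by rw [← hse]; simp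
      by_cases hpg : p.1 ∈ G
      · rw [hfixG _ hpg] at hps
        exact hidG _ hpg (hps ▸ hs)
      · have : ρ p.1 = p.1 + N := by
          rw [hρ _ (Finset.mem_union.2 (Or.inr (fst_mem_idsF hp)))]
          simp [hf₀, hpg]
        rw [this] at hps
        have := hlt s (by simp [Finset.mem_union, hs])
        omega
    have c1 : Chain τ S₁ u m := ih1 S₁ hOKu hOKm
    have c2 : Chain τ S₁ m v := ih2 S₁ hOKm hOKv
    have c1' := chain_rl ρ c1
    have c2' := chain_rl ρ c2
    rw [himg, hrla] at c1'
    rw [himg, hrlb] at c2'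
    exact Relation.ReflTransGen.trans c1' c2'

lemma idDisj_of_okS {S : Finset ℕ} {w u : List (Letter α)} (hS : idsF u ⊆ S)
    (h : OKS S w) : IdDisj w u := by
  intro p hp q hq hpq
  exact h p hp (hS (hpq ▸ fst_mem_idsF hq))

lemma chain_embed {x y : List (Letter α)} (hxy : IsNanoword (x ++ y))
    {a b : List (Letter α)} (h : Chain τ (idsF (x ++ y)) a b) :
    Cobordant τ (x ++ a ++ y) (x ++ b ++ y) := by
  induction h with
  | refl => exact Relation.EqvGen.refl _
  | tail hac hstep ih =>
    rcases hstep with ⟨hmv | hmv, h1, h2⟩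
    · exact Relation.EqvGen.trans _ _ _ ih (Relation.EqvGen.rel _ _
        (nanoMove_embed hxy (idDisj_of_okS (le_refl _) h1) (idDisj_of_okS (le_refl _) h2) hmv))
    · exact Relation.EqvGen.trans _ _ _ ih (Relation.EqvGen.symm _ _ (Relation.EqvGen.rel _ _
        (nanoMove_embed hxy (idDisj_of_okS (le_refl _) h2) (idDisj_of_okS (le_refl _) h1) hmv)))

/-- THE congruence: cobordism may be performed inside a context -/
lemma cobordant_append_congr {a b x y : List (Letter α)} (h : Cobordant τ a b)
    (ha : IsNanoword a) (hb : IsNanoword b)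
    (hxa : IsNanoword (x ++ a ++ y)) (hxb : IsNanoword (x ++ b ++ y)) :
    Cobordant τ (x ++ a ++ y) (x ++ b ++ y) := by
  obtain ⟨hxy, hda⟩ := isNanoword_mid_split hxa ha
  obtain ⟨-, hdb⟩ := isNanoword_mid_split hxb hb
  have ch := cobordant_to_chain h (idsF (x ++ y))
    (okS_of_idDisj rfl hda) (okS_of_idDisj rfl hdb)
  exact chain_embed hxy ch

end NanoAux

namespace NanoAux

variable {α : Type} {τ : α → α}

/-- relabel into even ids -/
def Ed (w : List (Letter α)) : List (Letter α) := rl (fun n => 2 * n) w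

/-- relabel into odd ids -/
def Od (w : List (Letter α)) : List (Letter α) := rl (fun n => 2 * n + 1) w

lemma even_inj : Function.Injective (fun n => 2 * n) := fun a b h => by simp only at h; omega

lemma odd_inj : Function.Injective (fun n => 2 * n + 1) := fun a b h => by simp only at h; omega

lemma idDisj_EO (a b : List (Letter α)) : IdDisj (Ed a) (Od b) := by
  intro p hp q hq
  obtain ⟨p', _, rfl⟩ := mem_rl_iff.1 hp
  obtain ⟨q', _, rfl⟩ := mem_rl_iff.1 hq
  simp only
  omega

lemma nanoEO {a b : List (Letter α)} (ha : IsNanoword a) (hb : IsNanoword b) :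
    IsNanoword (Ed a ++ Od b) :=
  isNanoword_append (isNanoword_rl even_inj ha) (isNanoword_rl odd_inj hb) (idDisj_EO a b)

/-- a one-iso-move cobordism -/
lemma cobordant_of_injOn {w : List (Letter α)} (hw : IsNanoword w) (f : ℕ → ℕ)
    (hinj : Set.InjOn f ↑(idsF w)) : Cobordant τ w (rl f w) := by
  obtain ⟨g, hg⟩ := exists_perm_extend (idsF w) f hinj
  have h := NanoMove.iso (τ := τ) w g g.injective hw
  have e : (w.map fun p => ((g p.1 : ℕ), p.2)) = rl f w :=
    rl_congr fun p hp => hg _ (fst_mem_idsF hp)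
  exact Relation.EqvGen.rel _ _ (e ▸ h)

lemma cobordant_Ed {w : List (Letter α)} (hw : IsNanoword w) : Cobordant τ w (Ed w) :=
  cobordant_of_injOn hw _ (even_inj.injOn)

lemma cobordant_Od {w : List (Letter α)} (hw : IsNanoword w) : Cobordant τ w (Od w) :=
  cobordant_of_injOn hw _ (odd_inj.injOn)

/-- the parity swap -/
def pswap : Letter α → Letter α := fun p => (if p.1 % 2 = 0 then p.1 + 1 else p.1 - 1, p.2)

lemma pswap_Ed (u : List (Letter α)) : (Ed u).map pswap = Od u := by
  show (u.map (Lr fun n => 2 * n)).map pswap = rl _ u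
  rw [List.map_map, rl_eq_map]
  apply List.map_congr_left
  intro p _
  simp only [Function.comp, Lr, pswap]
  have : (2 * p.1) % 2 = 0 := by omega
  simp [this]

lemma pswap_Od (u : List (Letter α)) : (Od u).map pswap = Ed u := by
  show (u.map (Lr fun n => 2 * n + 1)).map pswap = rl _ u
  rw [List.map_map, rl_eq_map]
  apply List.map_congr_left
  intro p _
  simp only [Function.comp, Lr, pswap]
  have : ¬ ((2 * p.1 + 1) % 2 = 0) := by omega
  simp [this]

lemma Ed_reverse (u : List (Letter α)) : (Ed u).reverse = Ed u.reverse :=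
  (rl_reverse _ u).symm

lemma Od_reverse (u : List (Letter α)) : (Od u).reverse = Od u.reverse :=
  (rl_reverse _ u).symm

lemma length_Ed (u : List (Letter α)) : (Ed u).length = u.length := length_rl _ u
lemma length_Od (u : List (Letter α)) : (Od u).length = u.length := length_rl _ u

/-- the key surgery: `z` of the shape `E w ++ O w.reverse` is slice -/
lemma slice_of_sym {z : List (Letter α)} (hz : IsNanoword z)
    (hmap : z.map pswap = z.reverse) (heven : Even z.length) :
    Cobordant τ z [] := by
  have hsp : splice [[], []] [z] = z := by simp [splice]
  have hfl : ([[], []] : List (List (Letter α))).flatten = [] := by simp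
  have hsym : IsSymPhrase τ [z] := by
    refine ⟨pswap, ?_, ?_⟩
    · intro v hv
      rw [List.mem_singleton] at hv
      subst hv
      exact hmap
    · intro B hB
      rw [show ([z] : List (List (Letter α))).flatten = z by simp] at hB
      constructor
      · intro _
        rfl
      · intro hn
        exact absurd ⟨z, List.mem_singleton_self z, hz.1 B hB⟩ hn
  have hev : IsEvenPhrase [z] := by
    intro v hv
    rw [List.mem_singleton] at hv
    subst hv
    exact heven
  have h := NanoMove.surgery (τ := τ) [[], []] [z] rfl hsym hev (by rw [hsp]; exact hz)
  rw [hsp, hfl] at h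
  exact Relation.EqvGen.rel _ _ h

lemma slice_EO {v : List (Letter α)} (hv : IsNanoword v) :
    Cobordant τ (Ed v ++ Od v.reverse) [] := by
  apply slice_of_sym (nanoEO hv (isNanoword_reverse hv))
  · rw [List.map_append, pswap_Ed, pswap_Od, List.reverse_append, Od_reverse,
      List.reverse_reverse, Ed_reverse]
  · rw [List.length_append, length_Ed, length_Od, List.length_reverse]
    exact ⟨v.length, by omega⟩

lemma slice_OE {v : List (Letter α)} (hv : IsNanoword v) :
    Cobordant τ (Ed v.reverse ++ Od v) [] := by
  apply slice_of_sym (nanoEO (isNanoword_reverse hv) hv)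
  · rw [List.map_append, pswap_Ed, pswap_Od, List.reverse_append, Od_reverse,
      Ed_reverse, List.reverse_reverse]
  · rw [List.length_append, length_Ed, length_Od, List.length_reverse]
    exact ⟨v.length, by omega⟩

end NanoAux

namespace NanoAux

variable {α : Type}

lemma nano_nil : IsNanoword ([] : List (Letter α)) := ⟨by simp, by simp⟩

/-- the canonical disjoint concatenation of two nanowords -/
def catEO (v w : Nano α) : Nano α := ⟨Ed v.1 ++ Od w.1, nanoEO v.2 w.2⟩

lemma cobordant_Ed_congr {τ : α → α} {a b : List (Letter α)} (h : Cobordant τ a b)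
    (ha : IsNanoword a) (hb : IsNanoword b) : Cobordant τ (Ed a) (Ed b) :=
  Relation.EqvGen.trans _ _ _
    (Relation.EqvGen.trans _ _ _ (Relation.EqvGen.symm _ _ (cobordant_Ed ha)) h)
    (cobordant_Ed hb)

lemma cobordant_Od_congr {τ : α → α} {a b : List (Letter α)} (h : Cobordant τ a b)
    (ha : IsNanoword a) (hb : IsNanoword b) : Cobordant τ (Od a) (Od b) :=
  Relation.EqvGen.trans _ _ _
    (Relation.EqvGen.trans _ _ _ (Relation.EqvGen.symm _ _ (cobordant_Od ha)) h)
    (cobordant_Od hb)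

lemma catEO_wd (τ : α → α) (a₁ b₁ a₂ b₂ : Nano α) (h1 : Cobordant τ a₁.1 a₂.1)
    (h2 : Cobordant τ b₁.1 b₂.1) :
    Cobordant τ (Ed a₁.1 ++ Od b₁.1) (Ed a₂.1 ++ Od b₂.1) := by
  have e1 := cobordant_Ed_congr h1 a₁.2 a₂.2
  have e2 := cobordant_Od_congr h2 b₁.2 b₂.2
  have hEa₁ := isNanoword_rl (α := α) even_inj a₁.2
  have hEa₂ := isNanoword_rl (α := α) even_inj a₂.2
  have hOb₁ := isNanoword_rl (α := α) odd_inj b₁.2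
  have hOb₂ := isNanoword_rl (α := α) odd_inj b₂.2
  have step1 : Cobordant τ (Ed a₁.1 ++ Od b₁.1) (Ed a₂.1 ++ Od b₁.1) := by
    have := cobordant_append_congr (x := ([] : List (Letter α))) (y := Od b₁.1)
      e1 hEa₁ hEa₂ (nanoEO a₁.2 b₁.2) (nanoEO a₂.2 b₁.2)
    simpa using this
  have step2 : Cobordant τ (Ed a₂.1 ++ Od b₁.1) (Ed a₂.1 ++ Od b₂.1) := by
    have := cobordant_append_congr (x := Ed a₂.1) (y := ([] : List (Letter α)))
      e2 hOb₁ hOb₂ (by simpa using nanoEO a₂.2 b₁.2) (by simpa using nanoEO a₂.2 b₂.2)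
    simpa using this
  exact Relation.EqvGen.trans _ _ _ step1 step2

/-- multiplication on cobordism classes -/
def qmul (τ : α → α) : Quotient (nanoSetoid τ) → Quotient (nanoSetoid τ)
    → Quotient (nanoSetoid τ) :=
  Quotient.lift₂ (fun v w => Quotient.mk (nanoSetoid τ) (catEO v w))
    (fun a₁ b₁ a₂ b₂ h1 h2 => Quotient.sound (catEO_wd τ a₁ b₁ a₂ b₂ h1 h2))

/-- the unit -/
def qone (τ : α → α) : Quotient (nanoSetoid τ) :=
  Quotient.mk (nanoSetoid τ) ⟨[], nano_nil⟩

lemma qmul_mk (τ : α → α) (v w : Nano α) :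
    qmul τ (Quotient.mk (nanoSetoid τ) v) (Quotient.mk (nanoSetoid τ) w)
      = Quotient.mk (nanoSetoid τ) (catEO v w) := rfl

lemma qone_mul (τ : α → α) (q : Quotient (nanoSetoid τ)) : qmul τ (qone τ) q = q := by
  induction q using Quotient.inductionOn with
  | h w =>
    refine (qmul_mk τ ⟨[], nano_nil⟩ w).trans ?_
    apply Quotient.sound
    show Cobordant τ (Ed [] ++ Od w.1) w.1
    have e : Ed ([] : List (Letter α)) ++ Od w.1 = Od w.1 := rfl
    rw [e]
    exact Relation.EqvGen.symm _ _ (cobordant_Od w.2)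

lemma qmul_one (τ : α → α) (q : Quotient (nanoSetoid τ)) : qmul τ q (qone τ) = q := by
  induction q using Quotient.inductionOn with
  | h w =>
    refine (qmul_mk τ w ⟨[], nano_nil⟩).trans ?_
    apply Quotient.sound
    show Cobordant τ (Ed w.1 ++ Od []) w.1
    have e : Ed w.1 ++ Od ([] : List (Letter α)) = Ed w.1 := by
      show Ed w.1 ++ [] = Ed w.1
      simp
    rw [e]
    exact Relation.EqvGen.symm _ _ (cobordant_Ed w.2)

lemma qmul_assoc (τ : α → α) (q₁ q₂ q₃ : Quotient (nanoSetoid τ)) :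
    qmul τ (qmul τ q₁ q₂) q₃ = qmul τ q₁ (qmul τ q₂ q₃) := by
  induction q₁, q₂, q₃ using Quotient.inductionOn₃ with
  | h v w u =>
    rw [qmul_mk, qmul_mk, qmul_mk, qmul_mk]
    apply Quotient.sound
    show Cobordant τ (Ed (Ed v.1 ++ Od w.1) ++ Od u.1) (Ed v.1 ++ Od (Ed w.1 ++ Od u.1))
    set f₀ : ℕ → ℕ := fun n => if n % 4 = 0 then n / 2 else if n % 4 = 2 then n - 1
      else 2 * n + 1 with hf₀
    have hinj : Function.Injective f₀ := by
      intro a b h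
      simp only [hf₀] at h
      split_ifs at h <;> omega
    have c1 : rl ((f₀ ∘ fun n => 2 * n) ∘ fun n => 2 * n) v.1 = rl (fun n => 2 * n) v.1 := by
      apply rl_congr
      intro p _
      simp only [Function.comp, hf₀]
      split_ifs <;> omega
    have c2 : rl ((f₀ ∘ fun n => 2 * n) ∘ fun n => 2 * n + 1) w.1
        = rl ((fun n => 2 * n + 1) ∘ fun n => 2 * n) w.1 := by
      apply rl_congr
      intro p _
      simp only [Function.comp, hf₀]
      split_ifs <;> omega
    have c3 : rl (f₀ ∘ fun n => 2 * n + 1) u.1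
        = rl ((fun n => 2 * n + 1) ∘ fun n => 2 * n + 1) u.1 := by
      apply rl_congr
      intro p _
      simp only [Function.comp, hf₀]
      split_ifs <;> omega
    have e : rl f₀ (Ed (Ed v.1 ++ Od w.1) ++ Od u.1)
        = Ed v.1 ++ Od (Ed w.1 ++ Od u.1) := by
      show rl f₀ (rl (fun n => 2 * n) (rl (fun n => 2 * n) v.1 ++ rl (fun n => 2 * n + 1) w.1)
          ++ rl (fun n => 2 * n + 1) u.1)
        = rl (fun n => 2 * n) v.1
          ++ rl (fun n => 2 * n + 1) (rl (fun n => 2 * n) w.1 ++ rl (fun n => 2 * n + 1) u.1)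
      rw [rl_append, rl_append, rl_append, rl_append, rl_rl, rl_rl, rl_rl, rl_rl, rl_rl, rl_rl,
        c1, c2, c3, List.append_assoc, rl_rl]
    have hn : IsNanoword (Ed (Ed v.1 ++ Od w.1) ++ Od u.1) :=
      nanoEO (nanoEO v.2 w.2) u.2
    have := cobordant_of_injOn (τ := τ) hn f₀ hinj.injOn
    rwa [e] at this

lemma qmul_inv_ex (τ : α → α) (v : Nano α) :
    qmul τ (Quotient.mk (nanoSetoid τ) v)
      (Quotient.mk (nanoSetoid τ) ⟨v.1.reverse, isNanoword_reverse v.2⟩) = qone τ := by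
  refine (qmul_mk τ v ⟨v.1.reverse, isNanoword_reverse v.2⟩).trans ?_
  apply Quotient.sound
  show Cobordant τ (Ed v.1 ++ Od v.1.reverse) []
  exact slice_EO v.2

lemma qmul_inv_ex' (τ : α → α) (v : Nano α) :
    qmul τ (Quotient.mk (nanoSetoid τ) ⟨v.1.reverse, isNanoword_reverse v.2⟩)
      (Quotient.mk (nanoSetoid τ) v) = qone τ := by
  refine (qmul_mk τ ⟨v.1.reverse, isNanoword_reverse v.2⟩ v).trans ?_
  apply Quotient.sound
  show Cobordant τ (Ed v.1.reverse ++ Od v.1) []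
  exact slice_OE v.2

lemma qinv_exists (τ : α → α) (q : Quotient (nanoSetoid τ)) :
    ∃ q', qmul τ q q' = qone τ := by
  induction q using Quotient.inductionOn with
  | h v => exact ⟨_, qmul_inv_ex τ v⟩

/-- the inverse -/
noncomputable def qinv (τ : α → α) (q : Quotient (nanoSetoid τ)) :
    Quotient (nanoSetoid τ) := (qinv_exists τ q).choose

lemma qmul_qinv (τ : α → α) (q : Quotient (nanoSetoid τ)) :
    qmul τ q (qinv τ q) = qone τ := (qinv_exists τ q).choose_spec

lemma qinv_eq (τ : α → α) (q q' : Quotient (nanoSetoid τ)) (h : qmul τ q' q = qone τ) :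
    qinv τ q = q' := by
  have h1 : qmul τ q' (qmul τ q (qinv τ q)) = q' := by rw [qmul_qinv, qmul_one]
  rw [← qmul_assoc, h, qone_mul] at h1
  exact h1

lemma qinv_mk (τ : α → α) (v u : Nano α) (hu : u.1 = v.1.reverse) :
    qinv τ (Quotient.mk (nanoSetoid τ) v) = Quotient.mk (nanoSetoid τ) u := by
  apply qinv_eq
  have : u = ⟨v.1.reverse, isNanoword_reverse v.2⟩ := Subtype.ext hu
  rw [this]
  exact qmul_inv_ex' τ v

lemma qinv_mul (τ : α → α) (q : Quotient (nanoSetoid τ)) :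
    qmul τ (qinv τ q) q = qone τ := by
  induction q using Quotient.inductionOn with
  | h v =>
    rw [qinv_mk τ v ⟨v.1.reverse, isNanoword_reverse v.2⟩ rfl]
    exact qmul_inv_ex' τ v

lemma lettersOf_disjoint_idDisj {v w : List (Letter α)}
    (h : Disjoint (lettersOf v) (lettersOf w)) : IdDisj v w := by
  intro p hp q hq hpq
  have h1 : p.1 ∈ lettersOf v := ⟨p.2, by simpa using hp⟩
  have h2 : p.1 ∈ lettersOf w := ⟨q.2, by rw [hpq]; simpa using hq⟩
  exact Set.disjoint_left.1 h h1 h2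

lemma qmul_concat (τ : α → α) (v w u : Nano α)
    (hd : Disjoint (lettersOf v.1) (lettersOf w.1)) (hu : u.1 = v.1 ++ w.1) :
    qmul τ (Quotient.mk (nanoSetoid τ) v) (Quotient.mk (nanoSetoid τ) w)
      = Quotient.mk (nanoSetoid τ) u := by
  classical
  have hdisj : IdDisj v.1 w.1 := lettersOf_disjoint_idDisj hd
  have hvw : IsNanoword (v.1 ++ w.1) := hu ▸ u.2
  rw [qmul_mk]
  apply Quotient.sound
  show Cobordant τ (Ed v.1 ++ Od w.1) u.1
  rw [hu]
  apply Relation.EqvGen.symm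
  set f₀ : ℕ → ℕ := fun n => if n ∈ idsF v.1 then 2 * n else 2 * n + 1 with hf₀
  have hinj : Function.Injective f₀ := by
    intro a b h
    simp only [hf₀] at h
    split_ifs at h <;> omega
  have e : rl f₀ (v.1 ++ w.1) = Ed v.1 ++ Od w.1 := by
    rw [rl_append]
    congr 1
    · apply rl_congr
      intro p hp
      simp [hf₀, fst_mem_idsF hp]
    · apply rl_congr
      intro p hp
      have : p.1 ∉ idsF v.1 := by
        intro hmem
        obtain ⟨q, hq, hqe⟩ := mem_idsF.1 hmem
        exact hdisj q hq p hp hqe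
      simp [hf₀, this]
  have := cobordant_of_injOn (τ := τ) hvw f₀ hinj.injOn
  rwa [e] at this

end NanoAux
/-- The cobordism classes of nanowords over `(α, τ)` form a group
under concatenation, in which the inverse of the class of `w` is the class of
the opposite nanoword `w⁻`. -/
theorem cobordismClasses_group {α : Type} (τ : α → α) :
    ∃ (mul : Quotient (nanoSetoid τ) → Quotient (nanoSetoid τ) → Quotient (nanoSetoid τ))
      (one : Quotient (nanoSetoid τ))
      (inv : Quotient (nanoSetoid τ) → Quotient (nanoSetoid τ)),
      -- multiplication is induced by concatenation (of disjoint representatives)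
      (∀ v w u : Nano α, Disjoint (lettersOf v.1) (lettersOf w.1) →
        u.1 = v.1 ++ w.1 →
        mul (Quotient.mk (nanoSetoid τ) v) (Quotient.mk (nanoSetoid τ) w)
          = Quotient.mk (nanoSetoid τ) u) ∧
      -- the unit is the class of the empty nanoword
      (∀ u : Nano α, u.1 = [] → one = Quotient.mk (nanoSetoid τ) u) ∧
      -- the inverse of the class of `w` is the class of `w⁻`
      (∀ v u : Nano α, u.1 = v.1.reverse →
        inv (Quotient.mk (nanoSetoid τ) v) = Quotient.mk (nanoSetoid τ) u) ∧
      -- the group axioms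
      (∀ a b c, mul (mul a b) c = mul a (mul b c)) ∧
      (∀ a, mul one a = a) ∧ (∀ a, mul a one = a) ∧
      (∀ a, mul (inv a) a = one) ∧ (∀ a, mul a (inv a) = one) := by
  classical
  refine ⟨NanoAux.qmul τ, NanoAux.qone τ, NanoAux.qinv τ, ?_, ?_, ?_, ?_, ?_, ?_, ?_, ?_⟩
  · intro v w u hd hu
    exact NanoAux.qmul_concat τ v w u hd hu
  · intro u hu
    have : u = ⟨[], NanoAux.nano_nil⟩ := Subtype.ext hu
    rw [this]
    rfl
  · intro v u hu
    exact NanoAux.qinv_mk τ v u hu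
  · exact NanoAux.qmul_assoc τ
  · exact NanoAux.qone_mul τ
  · exact NanoAux.qmul_one τ
  · exact NanoAux.qinv_mul τ
  · exact NanoAux.qmul_qinv τ
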